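/- For σ > 0, the infimum over ω > 0 of (1 − e^{−2ωσ})/(2ω²e^{−2ωσ}) equals 2σ²·(1 − e^{−c})/(c²e^{−c}) where c = 2 + W(−2e^{−2}), and this infimum times the Cauchy Fisher information 1/(2σ²) is strictly greater than 1. -/

import Mathlib

open Set

private lemma hderivG (t : ℝ) (ht : t ≠ 0) :
    HasDerivAt (fun x : ℝ => (Real.exp x - 1) / x ^ 2)
      (((t - 2) * Real.exp t + 2) / t ^ 3) t := by
  have h1 : HasDerivAt (fun x : ℝ => Real.exp x - 1) (Real.exp t) t :=
    (Real.hasDerivAt_exp t).sub_const 1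
  have h2 : HasDerivAt (fun x : ℝ => x ^ 2) (2 * t) t := by
    simpa using hasDerivAt_pow 2 t
  have h3 := h1.fun_div h2 (pow_ne_zero 2 ht)
  convert h3 using 1 <;> try rfl
  field_simp
  ring

private lemma hderivH (t : ℝ) :
    HasDerivAt (fun x : ℝ => (x - 2) * Real.exp x + 2) ((t - 1) * Real.exp t) t := by
  have h1 : HasDerivAt (fun x : ℝ => (x - 2) * Real.exp x)
      (1 * Real.exp t + (t - 2) * Real.exp t) t :=
    ((hasDerivAt_id t).sub_const 2).fun_mul (Real.hasDerivAt_exp t)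
  have h2 := h1.add_const 2
  convert h2 using 1 <;> try rfl
  ring

private lemma H_anti : StrictAntiOn (fun x : ℝ => (x - 2) * Real.exp x + 2) (Set.Icc 0 1) := by
  apply strictAntiOn_of_deriv_neg (convex_Icc 0 1)
  · exact fun t _ => ((hderivH t).continuousAt).continuousWithinAt
  · intro t ht
    rw [interior_Icc] at ht
    rw [(hderivH t).deriv]
    exact mul_neg_of_neg_of_pos (by linarith [ht.2]) (Real.exp_pos t)

private lemma H_mono : StrictMonoOn (fun x : ℝ => (x - 2) * Real.exp x + 2) (Set.Ici 1) := by
  apply strictMonoOn_of_deriv_pos (convex_Ici 1)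
  · exact fun t _ => ((hderivH t).continuousAt).continuousWithinAt
  · intro t ht
    rw [interior_Ici] at ht
    rw [(hderivH t).deriv]
    exact mul_pos (by linarith [mem_Ioi.mp ht]) (Real.exp_pos t)

/-- Cauchy noise, per-sensor power constraint: the infimum over `ω > 0` of
`(1 − e^{−2ωσ})/(2ω²e^{−2ωσ})` equals `2σ²(1 − e^{−c})/(c²e^{−c})` with
`c = 2 + W(−2e^{−2})` (`W` the principal Lambert W branch, characterized by
`w·e^w = −2e^{−2}`, `w ≥ −1`), and this infimum times the Cauchy Fisher
information `1/(2σ²)` is strictly greater than `1` (no asymptotic efficiency). -/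
theorem cauchy_are_gt_one (σ : ℝ) (hσ : 0 < σ) (w : ℝ)
    (hw : w * Real.exp w = -2 * Real.exp (-2)) (hw1 : -1 ≤ w) :
    IsLeast ((fun ω : ℝ =>
        (1 - Real.exp (-2 * ω * σ)) / (2 * ω^2 * Real.exp (-2 * ω * σ))) ''
        Set.Ioi 0)
      (2 * σ^2 * (1 - Real.exp (-(2 + w))) / ((2 + w)^2 * Real.exp (-(2 + w)))) ∧
    1 < (2 * σ^2 * (1 - Real.exp (-(2 + w))) / ((2 + w)^2 * Real.exp (-(2 + w)))) *
      (1 / (2 * σ^2)) := by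
  set c : ℝ := 2 + w with hc
  have hc0 : (c - 2) * Real.exp c = -2 := by
    have h2 : Real.exp c = Real.exp w * Real.exp 2 := by
      rw [← Real.exp_add]; ring_nf; rfl
    have h3 : (c - 2) * Real.exp c = w * Real.exp w * Real.exp 2 := by
      rw [h2, hc]; ring
    rw [h3, hw, mul_assoc, ← Real.exp_add]
    norm_num
  have hc2 : c < 2 := by
    by_contra h
    push_neg at h
    nlinarith [Real.exp_pos c]
  have hc1 : 1 < c := by
    have hle : (1:ℝ) ≤ c := by rw [hc]; linarith
    rcases lt_or_eq_of_le hle with h | h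
    · exact h
    · exfalso
      rw [← h] at hc0
      have := Real.exp_one_gt_d9
      nlinarith
  have hcpos : 0 < c := by linarith
  -- H vanishes at 0 and c
  have hH0 : (fun x : ℝ => (x - 2) * Real.exp x + 2) 0 = 0 := by
    simp [Real.exp_zero]
  have hHc : (fun x : ℝ => (x - 2) * Real.exp x + 2) c = 0 := by
    simp only; linarith
  -- sign of H
  have hHneg : ∀ t ∈ Set.Ioo (0:ℝ) c, (t - 2) * Real.exp t + 2 < 0 := by
    intro t ht
    rcases le_or_gt t 1 with h | h
    · have := H_anti (Set.mem_Icc.mpr ⟨le_refl 0, zero_le_one⟩)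
        (Set.mem_Icc.mpr ⟨ht.1.le, h⟩) ht.1
      simpa [hH0] using this
    · have := H_mono (Set.mem_Ici.mpr h.le) (Set.mem_Ici.mpr hc1.le) ht.2
      simp only at this
      linarith
  have hHpos : ∀ t, c < t → 0 < (t - 2) * Real.exp t + 2 := by
    intro t ht
    have := H_mono (Set.mem_Ici.mpr hc1.le) (Set.mem_Ici.mpr (by linarith)) ht
    simp only at this
    linarith
  -- g and its monotonicity
  set g : ℝ → ℝ := fun t => (Real.exp t - 1) / t ^ 2 with hg
  have gAnti : StrictAntiOn g (Set.Ioc 0 c) := by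
    apply strictAntiOn_of_deriv_neg (convex_Ioc 0 c)
    · exact fun t ht => ((hderivG t (ne_of_gt ht.1)).continuousAt).continuousWithinAt
    · intro t ht
      rw [interior_Ioc] at ht
      rw [(hderivG t (ne_of_gt ht.1)).deriv]
      exact div_neg_of_neg_of_pos (hHneg t ht) (pow_pos ht.1 3)
  have gMono : StrictMonoOn g (Set.Ici c) := by
    apply strictMonoOn_of_deriv_pos (convex_Ici c)
    · intro t ht
      exact ((hderivG t (ne_of_gt (lt_of_lt_of_le hcpos (mem_Ici.mp ht)))).continuousAt).continuousWithinAt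
    · intro t ht
      rw [interior_Ici] at ht
      have htpos : 0 < t := lt_trans hcpos (mem_Ioi.mp ht)
      rw [(hderivG t (ne_of_gt htpos)).deriv]
      exact div_pos (hHpos t (mem_Ioi.mp ht)) (pow_pos htpos 3)
  have hmin : ∀ t : ℝ, 0 < t → g c ≤ g t := by
    intro t ht
    rcases le_or_gt t c with h | h
    · rcases eq_or_lt_of_le h with rfl | h'
      · exact le_refl _
      · exact (gAnti ⟨ht, h⟩ ⟨hcpos, le_refl c⟩ h').le
    · exact (gMono (Set.mem_Ici.mpr (le_refl c)) (Set.mem_Ici.mpr h.le) h).le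
  -- rewriting the objective
  have hf : ∀ ω : ℝ, 0 < ω →
      (1 - Real.exp (-2 * ω * σ)) / (2 * ω^2 * Real.exp (-2 * ω * σ))
        = 2 * σ^2 * g (2 * ω * σ) := by
    intro ω hω
    have hE : Real.exp (2 * ω * σ) ≠ 0 := Real.exp_ne_zero _
    rw [show (-2 * ω * σ : ℝ) = -(2 * ω * σ) by ring, Real.exp_neg]
    simp only [hg]
    field_simp
    try ring
  have hval : 2 * σ^2 * (1 - Real.exp (-c)) / (c^2 * Real.exp (-c)) = 2 * σ^2 * g c := by
    rw [Real.exp_neg]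
    simp only [hg]
    have hE : Real.exp c ≠ 0 := Real.exp_ne_zero _
    field_simp
  constructor
  · constructor
    · refine ⟨c / (2 * σ), Set.mem_Ioi.mpr (by positivity), ?_⟩
      have hω : (0:ℝ) < c / (2 * σ) := by positivity
      have hts : 2 * (c / (2 * σ)) * σ = c := by
        field_simp; try ring
      show (1 - Real.exp (-2 * (c / (2 * σ)) * σ)) /
          (2 * (c / (2 * σ))^2 * Real.exp (-2 * (c / (2 * σ)) * σ)) = _
      rw [hf _ hω, hts, hval]
    · rintro y ⟨ω, hω, rfl⟩
      show 2 * σ^2 * (1 - Real.exp (-c)) / (c^2 * Real.exp (-c)) ≤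
        (1 - Real.exp (-2 * ω * σ)) / (2 * ω^2 * Real.exp (-2 * ω * σ))
      rw [hval, hf ω (Set.mem_Ioi.mp hω)]
      have ht : (0:ℝ) < 2 * ω * σ := by
        have := Set.mem_Ioi.mp hω; positivity
      exact mul_le_mul_of_nonneg_left (hmin _ ht) (by positivity)
  · rw [hval]
    have heq : 2 * σ^2 * g c * (1 / (2 * σ^2)) = g c := by
      field_simp
    rw [heq, hg]
    simp only
    rw [lt_div_iff₀ (pow_pos hcpos 2)]
    nlinarith [mul_pos hcpos (pow_pos (show (0:ℝ) < c - 1 by linarith) 2),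
      Real.exp_pos c, mul_pos (sub_pos.mpr hc2) (Real.exp_pos c)]
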